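/- Let p be a prime and let G be a finitely generated group. If G is conjugacy p-separable and has Property A, then 𝓘_p(G) = I_p(G)/Inn(G) is residually p, where I_p(G) is the kernel of the natural homomorphism Aut(G) → Aut(G/γ_2^p G) and Inn(G) is the group of inner automorphisms of G. -/

import Mathlib

/-! Common definitions following the paper "Residual p properties of mapping class groups
and surface groups" by L. Paris. -/

/-- The commutator `[g,h] = g⁻¹h⁻¹gh`. -/
def commAB {G : Type*} [Group G] (g h : G) : G := g⁻¹ * h⁻¹ * g * h

/-- The commutator subgroup `[K,H]`, generated by all `[g,h]` with `g ∈ K`, `h ∈ H`. -/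
def commSub {G : Type*} [Group G] (K H : Subgroup G) : Subgroup G :=
  Subgroup.closure {x | ∃ g ∈ K, ∃ h ∈ H, x = commAB g h}

/-- The subgroup `[K,H]^p`, generated by all `[g,h]` (`g ∈ K`, `h ∈ H`) together with all
`h^p` (`h ∈ H`). -/
def pComm (p : ℕ) {G : Type*} [Group G] (K H : Subgroup G) : Subgroup G :=
  Subgroup.closure ({x | ∃ g ∈ K, ∃ h ∈ H, x = commAB g h} ∪ {x | ∃ h ∈ H, x = h ^ p})

/-- The lower `𝔽_p`-linear central filtration: `γ_1^p G = G` and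
`γ_{n+1}^p G = [G, γ_n^p G]^p` (with the harmless convention `γ_0^p G = G`). -/
def gammaP (p : ℕ) (G : Type*) [Group G] : ℕ → Subgroup G
  | 0 => ⊤
  | 1 => ⊤
  | n + 2 => pComm p ⊤ (gammaP p G (n + 1))

theorem pComm_top_normal (p : ℕ) {G : Type*} [Group G] {H : Subgroup G} (hH : H.Normal) :
    (pComm p ⊤ H).Normal := by
  constructor
  intro x hx g
  unfold pComm at hx ⊢
  induction hx using Subgroup.closure_induction with
  | mem y hy =>
    apply Subgroup.subset_closure
    rcases hy with ⟨a, -, h, hh, rfl⟩ | ⟨h, hh, rfl⟩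
    · exact Or.inl ⟨g * a * g⁻¹, trivial, g * h * g⁻¹, hH.conj_mem h hh g,
        by unfold commAB; group⟩
    · exact Or.inr ⟨g * h * g⁻¹, hH.conj_mem h hh g, (conj_pow).symm⟩
  | one => simpa using Subgroup.one_mem _
  | mul a b ha hb iha ihb =>
    have e : g * (a * b) * g⁻¹ = (g * a * g⁻¹) * (g * b * g⁻¹) := by group
    rw [e]; exact Subgroup.mul_mem _ iha ihb
  | inv a ha iha =>
    have e : g * a⁻¹ * g⁻¹ = (g * a * g⁻¹)⁻¹ := by group
    rw [e]; exact Subgroup.inv_mem _ iha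

instance gammaP_normal (p : ℕ) (G : Type*) [Group G] : ∀ n, (gammaP p G n).Normal
  | 0 => by unfold gammaP; infer_instance
  | 1 => by unfold gammaP; infer_instance
  | n + 2 => by unfold gammaP; exact pComm_top_normal p (gammaP_normal p G (n + 1))

/-- `G` is residually `p`: every nontrivial element survives in some finite `p`-group
quotient. -/
def IsResiduallyP (p : ℕ) (G : Type*) [Group G] : Prop :=
  ∀ g : G, g ≠ 1 → ∃ (P : Type) (_ : Group P) (_ : Finite P) (φ : G →* P),
    IsPGroup p P ∧ Function.Surjective φ ∧ φ g ≠ 1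

/-- `G` is conjugacy `p`-separable. -/
def IsConjPSeparable (p : ℕ) (G : Type*) [Group G] : Prop :=
  ∀ g h : G, IsConj g h ∨ ∃ (P : Type) (_ : Group P) (_ : Finite P) (φ : G →* P),
    IsPGroup p P ∧ Function.Surjective φ ∧ ¬ IsConj (φ g) (φ h)

/-- Property A: every automorphism of `G` preserving every conjugacy class is inner. -/
def PropertyA (G : Type*) [Group G] : Prop :=
  ∀ α : MulAut G, (∀ g : G, IsConj g (α g)) → α ∈ (MulAut.conj : G →* MulAut G).range

/-- `A_n`: the kernel of the natural homomorphism `Aut(G) → Aut(G/γ_{n+1}^p G)`, i.e. the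
automorphisms acting trivially modulo `γ_{n+1}^p G`. -/
def An (p : ℕ) (G : Type*) [Group G] (n : ℕ) : Subgroup (MulAut G) where
  carrier := {α | ∀ g : G, g⁻¹ * α g ∈ gammaP p G (n + 1)}
  one_mem' := by intro g; simpa using Subgroup.one_mem _
  mul_mem' := by
    intro a b ha hb g
    have e : g⁻¹ * (a * b) g = (g⁻¹ * b g) * ((b g)⁻¹ * a (b g)) := by
      rw [MulAut.mul_apply]; group
    rw [e]; exact Subgroup.mul_mem _ (hb g) (ha (b g))
  inv_mem' := by
    intro a ha g
    have h := ha ((a⁻¹ : MulAut G) g)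
    rw [MulAut.apply_inv_self] at h
    have e : g⁻¹ * (a⁻¹ : MulAut G) g = (((a⁻¹ : MulAut G) g)⁻¹ * g)⁻¹ := by group
    rw [e]; exact Subgroup.inv_mem _ h

theorem mem_An {p : ℕ} {G : Type*} [Group G] {n : ℕ} {α : MulAut G} :
    α ∈ An p G n ↔ ∀ g : G, g⁻¹ * α g ∈ gammaP p G (n + 1) := Iff.rfl

/-- `I_p(G)`: the kernel of the natural homomorphism `Aut(G) → Aut(G/γ_2^p G)`. -/
abbrev Ip (p : ℕ) (G : Type*) [Group G] : Subgroup (MulAut G) := An p G 1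

/-- `Inn(G)`, viewed as a subgroup of `I_p(G)`. -/
def InnSub (p : ℕ) (G : Type*) [Group G] : Subgroup (Ip p G) :=
  Subgroup.comap (Ip p G).subtype (MulAut.conj : G →* MulAut G).range

instance innSub_normal (p : ℕ) (G : Type*) [Group G] : (InnSub p G).Normal := by
  constructor
  rintro n hn g
  obtain ⟨x, hx⟩ := hn
  refine ⟨(g : MulAut G) x, ?_⟩
  have hx' : MulAut.conj x = (n : MulAut G) := hx
  show MulAut.conj ((g : MulAut G) x) = ((g * n * g⁻¹ : Ip p G) : MulAut G)
  ext y
  simp only [Subgroup.coe_mul, Subgroup.coe_inv, MulAut.mul_apply, MulAut.conj_apply, ← hx',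
    map_mul, map_inv, MulAut.apply_inv_self]

/-- The surface relator `[x_1,y_1][x_2,y_2]⋯[x_ρ,y_ρ]` in the free group on
`x_1, …, x_ρ, y_1, …, y_ρ`. -/
def surfaceRel (ρ : ℕ) : FreeGroup (Fin ρ ⊕ Fin ρ) :=
  (List.ofFn fun i : Fin ρ =>
    commAB (FreeGroup.of (Sum.inl i)) (FreeGroup.of (Sum.inr i))).prod

/-- The fundamental group of the closed oriented surface of genus `ρ`, given by the
presentation `⟨x_1, …, x_ρ, y_1, …, y_ρ | [x_1,y_1]⋯[x_ρ,y_ρ] = 1⟩`. -/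
abbrev SurfaceGroup (ρ : ℕ) : Type :=
  PresentedGroup ({surfaceRel ρ} : Set (FreeGroup (Fin ρ ⊕ Fin ρ)))

open scoped commutatorElement

section AuxLemmas

open Subgroup

variable {p : ℕ} {G : Type*} [Group G]

lemma commAB_eq_commutator (g h : G) : commAB g h = ⁅g⁻¹, h⁻¹⁆ := by
  simp [commAB, commutatorElement_def]

lemma mem_pComm_comm {K H : Subgroup G} {g h : G} (hg : g ∈ K) (hh : h ∈ H) :
    commAB g h ∈ pComm p K H :=
  Subgroup.subset_closure (Or.inl ⟨g, hg, h, hh, rfl⟩)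

lemma mem_pComm_pow {K H : Subgroup G} {h : G} (hh : h ∈ H) : h ^ p ∈ pComm p K H :=
  Subgroup.subset_closure (Or.inr ⟨h, hh, rfl⟩)

lemma pComm_le {H : Subgroup G} (hH : H.Normal) : pComm p ⊤ H ≤ H := by
  refine (Subgroup.closure_le _).mpr ?_
  rintro x (⟨g, -, h, hh, rfl⟩ | ⟨h, hh, rfl⟩)
  · show g⁻¹ * h⁻¹ * g * h ∈ H
    exact mul_mem (by simpa using hH.conj_mem _ (inv_mem hh) g⁻¹) hh
  · exact pow_mem hh p

lemma gammaP_succ_succ (n : ℕ) : gammaP p G (n+2) = pComm p ⊤ (gammaP p G (n+1)) := rfl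

lemma gammaP_succ_le : ∀ n : ℕ, gammaP p G (n+1) ≤ gammaP p G n
  | 0 => le_rfl
  | n+1 => by
      rw [gammaP_succ_succ]
      exact pComm_le (gammaP_normal p G (n+1))

lemma gammaP_le_of_le {m n : ℕ} (h : m ≤ n) : gammaP p G n ≤ gammaP p G m := by
  induction h with
  | refl => exact le_rfl
  | step h ih => exact le_trans (gammaP_succ_le _) ih

lemma commutator_mem_gammaP {n : ℕ} {h : G} (t : G) (hh : h ∈ gammaP p G (n+1)) :
    ⁅t, h⁆ ∈ gammaP p G (n+2) := by
  have e : ⁅t, h⁆ = commAB t⁻¹ h⁻¹ := by simp [commAB, commutatorElement_def]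
  rw [e, gammaP_succ_succ]
  exact mem_pComm_comm trivial (inv_mem hh)

lemma commutator_mem_gammaP' {n : ℕ} {h : G} (t : G) (hh : h ∈ gammaP p G (n+1)) :
    ⁅h, t⁆ ∈ gammaP p G (n+2) := by
  rw [← commutatorElement_inv]
  exact inv_mem (commutator_mem_gammaP t hh)

lemma pow_mem_gammaP {n : ℕ} {h : G} (hh : h ∈ gammaP p G (n+1)) :
    h ^ p ∈ gammaP p G (n+2) := by
  rw [gammaP_succ_succ]; exact mem_pComm_pow hh

lemma pComm_map {P : Type*} [Group P] (φ : G →* P) (hφ : Function.Surjective φ)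
    (H : Subgroup G) : (pComm p ⊤ H).map φ = pComm p ⊤ (H.map φ) := by
  unfold pComm
  rw [MonoidHom.map_closure]
  congr 1
  ext x
  simp only [Set.mem_union, Set.mem_setOf_eq, Set.mem_image]
  constructor
  · rintro ⟨y, (⟨g, -, h, hh, rfl⟩ | ⟨h, hh, rfl⟩), rfl⟩
    · exact Or.inl ⟨φ g, trivial, φ h, ⟨h, hh, rfl⟩, by simp [commAB]⟩
    · exact Or.inr ⟨φ h, ⟨h, hh, rfl⟩, by simp⟩
  · rintro (⟨g, -, h, ⟨h0, hh0, rfl⟩, rfl⟩ | ⟨h, ⟨h0, hh0, rfl⟩, rfl⟩)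
    · obtain ⟨g0, rfl⟩ := hφ g
      exact ⟨commAB g0 h0, Or.inl ⟨g0, trivial, h0, hh0, rfl⟩, by simp [commAB]⟩
    · exact ⟨h0 ^ p, Or.inr ⟨h0, hh0, rfl⟩, by simp⟩

lemma gammaP_map {P : Type*} [Group P] (φ : G →* P) (hφ : Function.Surjective φ) :
    ∀ n, (gammaP p G n).map φ = gammaP p P n
  | 0 => by
      show (⊤ : Subgroup G).map φ = ⊤
      rw [← MonoidHom.range_eq_map]
      exact MonoidHom.range_eq_top.mpr hφ
  | 1 => by
      show (⊤ : Subgroup G).map φ = ⊤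
      rw [← MonoidHom.range_eq_map]
      exact MonoidHom.range_eq_top.mpr hφ
  | n+2 => by
      rw [gammaP_succ_succ, pComm_map φ hφ, gammaP_map φ hφ (n+1), gammaP_succ_succ]

end AuxLemmas


section CommuteHelpers

variable {Q : Type*} [Group Q]

lemma conj_central {c : Q} (hc : ∀ z : Q, Commute c z) (a : Q) : a * c * a⁻¹ = c := by
  rw [mul_inv_eq_iff_eq_mul]
  exact ((hc a).eq).symm

lemma central_conj {c : Q} (hc : ∀ z : Q, Commute c z) (K : Q) : c⁻¹ * K * c = K := by
  rw [mul_assoc, ← (hc K).eq, ← mul_assoc, inv_mul_cancel, one_mul]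

lemma comm_mul_right (a x y : Q) : ⁅a, x * y⁆ = ⁅a, x⁆ * (x * ⁅a, y⁆ * x⁻¹) := by
  simp only [commutatorElement_def]; group

lemma comm_pow_of_central (a b : Q) (hc : ∀ z : Q, Commute ⁅a, b⁆ z) :
    ∀ n : ℕ, ⁅a, b ^ n⁆ = ⁅a, b⁆ ^ n := by
  intro n
  induction n with
  | zero => simp
  | succ n ih =>
      rw [pow_succ', comm_mul_right, ih,
        conj_central (fun z => (hc z).pow_left n) b, ← pow_succ']

lemma comm_comm_of_central (v g u : Q) (hc : ∀ z : Q, Commute ⁅v, u⁆ z) :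
    ⁅v, ⁅g, u⁆⁆ = ⁅⁅v, g⁆, g * u * g⁻¹⁆ := by
  have hid : ⁅v, ⁅g, u⁆⁆ =
      ⁅v, g⁆ * (g * ⁅v, u⁆ * g⁻¹) * ((g * u * g⁻¹) * ⁅v, g⁆⁻¹ * (g * u * g⁻¹)⁻¹) *
        (⁅g, u⁆ * ⁅v, u⁆⁻¹ * ⁅g, u⁆⁻¹) := by
    simp only [commutatorElement_def]; group
  rw [hid, conj_central hc, conj_central (fun z => (hc z).inv_left)]
  have h3 : ⁅v, u⁆ * ((g * u * g⁻¹) * ⁅v, g⁆⁻¹ * (g * u * g⁻¹)⁻¹)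
      = ((g * u * g⁻¹) * ⁅v, g⁆⁻¹ * (g * u * g⁻¹)⁻¹) * ⁅v, u⁆ := (hc _).eq
  calc ⁅v, g⁆ * ⁅v, u⁆ * ((g * u * g⁻¹) * ⁅v, g⁆⁻¹ * (g * u * g⁻¹)⁻¹) * ⁅v, u⁆⁻¹
      = ⁅v, g⁆ * (⁅v, u⁆ * ((g * u * g⁻¹) * ⁅v, g⁆⁻¹ * (g * u * g⁻¹)⁻¹)) * ⁅v, u⁆⁻¹ := by
        group
    _ = ⁅v, g⁆ * (((g * u * g⁻¹) * ⁅v, g⁆⁻¹ * (g * u * g⁻¹)⁻¹) * ⁅v, u⁆) * ⁅v, u⁆⁻¹ := by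
        rw [h3]
    _ = ⁅⁅v, g⁆, g * u * g⁻¹⁆ := by simp only [commutatorElement_def]; group

lemma commAB_mul_right_central (X Y : Q) {c : Q} (hc : ∀ z : Q, Commute c z) :
    commAB X (Y * c) = commAB X Y := by
  have hid : commAB X (Y * c) = commAB X c * (c⁻¹ * commAB X Y * c) := by
    unfold commAB; group
  have h1 : commAB X c = 1 := by
    have e : commAB X c = ⁅X⁻¹, c⁻¹⁆ := commAB_eq_commutator X c
    rw [e, commutatorElement_eq_one_iff_commute]
    exact ((hc X⁻¹).symm).inv_right
  rw [hid, h1, central_conj hc, one_mul]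

end CommuteHelpers

section Quot

variable {p : ℕ} {G : Type*} [Group G]

lemma mem_of_image_eq_one {N : Subgroup G} [N.Normal] {x : G}
    (h : (QuotientGroup.mk' N) x = 1) : x ∈ N := (QuotientGroup.eq_one_iff _).mp h

lemma central_image {N : Subgroup G} [N.Normal] {d : G} (hd : ∀ t : G, ⁅d, t⁆ ∈ N) :
    ∀ z : G ⧸ N, Commute ((QuotientGroup.mk' N) d) z := by
  intro z
  induction z using QuotientGroup.induction_on with
  | H t =>
    rw [← commutatorElement_eq_one_iff_commute]
    have : ((QuotientGroup.mk' N) t : G ⧸ N) = (t : G ⧸ N) := rfl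
    rw [show ((t : G) : G ⧸ N) = (QuotientGroup.mk' N) t from rfl, ← map_commutatorElement]
    exact (QuotientGroup.eq_one_iff _).mpr (hd t)

/-- Key bilinearity: `⁅γ_{i+1}, γ_{j+1}⁆ ≤ γ_{i+j+2}`, elementwise. -/
lemma comm_mem_gammaP_add :
    ∀ (j i : ℕ) (v x : G), v ∈ gammaP p G (i+1) → x ∈ gammaP p G (j+1) →
      ⁅v, x⁆ ∈ gammaP p G (i+j+2) := by
  intro j
  induction j using Nat.strong_induction_on with
  | _ j IH =>
    match j with
    | 0 => exact fun i v x hv _ => commutator_mem_gammaP' x hv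
    | Nat.succ j =>
      intro i v x hv hx
      rw [gammaP_succ_succ] at hx
      unfold pComm at hx
      induction hx using Subgroup.closure_induction with
      | mem y hy =>
        have hNnorm : (gammaP p G (i + (j+1) + 2)).Normal := gammaP_normal p G _
        set N := gammaP p G (i + (j+1) + 2) with hN
        set π : G →* G ⧸ N := QuotientGroup.mk' N with hπ
        rcases hy with ⟨g, -, u, hu, rfl⟩ | ⟨u, hu, rfl⟩
        · -- y = commAB g u = ⁅g⁻¹, u⁻¹⁆
          rw [commAB_eq_commutator]
          have h1 : ⁅v, u⁻¹⁆ ∈ gammaP p G (i + j + 2) :=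
            IH j (Nat.lt_succ_self j) i v u⁻¹ hv (inv_mem hu)
          have hd : ∀ t : G, ⁅(⁅v, u⁻¹⁆ : G), t⁆ ∈ N := by
            intro t
            have h2 := commutator_mem_gammaP' (n := i + j + 1) t h1
            rw [hN, show i + (j+1) + 2 = i + j + 1 + 2 by omega]
            exact h2
          have hc : ∀ z : G ⧸ N, Commute (⁅π v, π u⁻¹⁆) z := by
            rw [← map_commutatorElement]
            exact central_image hd
          apply mem_of_image_eq_one (N := N)
          rw [map_commutatorElement, map_commutatorElement,
            comm_comm_of_central _ _ _ hc]
          have e : ⁅⁅π v, π g⁻¹⁆, π g⁻¹ * π u⁻¹ * (π g⁻¹)⁻¹⁆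
              = π ⁅⁅v, g⁻¹⁆, g⁻¹ * u⁻¹ * g⁆ := by
            simp only [map_commutatorElement, map_mul, map_inv, inv_inv]
          rw [e]
          apply (QuotientGroup.eq_one_iff _).mpr
          have m1 : ⁅v, g⁻¹⁆ ∈ gammaP p G (i+2) := commutator_mem_gammaP' g⁻¹ hv
          have m2 : g⁻¹ * u⁻¹ * g ∈ gammaP p G (j+1) := by
            have := (gammaP_normal p G (j+1)).conj_mem _ (inv_mem hu) g⁻¹
            simpa using this
          have m3 := IH j (Nat.lt_succ_self j) (i+1) _ _ m1 m2
          rw [hN, show i + (j+1) + 2 = i + 1 + j + 2 by omega]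
          exact m3
        · -- y = u ^ p
          have h1 : ⁅v, u⁆ ∈ gammaP p G (i + j + 2) :=
            IH j (Nat.lt_succ_self j) i v u hv hu
          have hd : ∀ t : G, ⁅(⁅v, u⁆ : G), t⁆ ∈ N := by
            intro t
            have h2 := commutator_mem_gammaP' (n := i + j + 1) t h1
            rw [hN, show i + (j+1) + 2 = i + j + 1 + 2 by omega]
            exact h2
          have hc : ∀ z : G ⧸ N, Commute (⁅π v, π u⁆) z := by
            rw [← map_commutatorElement]
            exact central_image hd
          apply mem_of_image_eq_one (N := N)
          rw [map_commutatorElement, map_pow, comm_pow_of_central _ _ hc,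
            ← map_commutatorElement, ← map_pow]
          apply (QuotientGroup.eq_one_iff _).mpr
          have m4 := pow_mem_gammaP (p := p) (n := i + j + 1) h1
          rw [hN, show i + (j+1) + 2 = i + j + 1 + 2 by omega]
          exact m4
      | one => simpa using Subgroup.one_mem _
      | mul a b ha hb iha ihb =>
        rw [comm_mul_right]
        exact mul_mem iha ((gammaP_normal p G _).conj_mem _ ihb a)
      | inv a ha iha =>
        have e : ⁅v, a⁻¹⁆ = a⁻¹ * ⁅v, a⁆⁻¹ * a := by
          simp only [commutatorElement_def]; group
        rw [e]
        have := (gammaP_normal p G _).conj_mem _ (inv_mem iha) a⁻¹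
        simpa using this

end Quot


section Stab

variable {p : ℕ} {G : Type*} [Group G]

lemma map_commAB {P : Type*} [Group P] (φ : G →* P) (x y : G) :
    φ (commAB x y) = commAB (φ x) (φ y) := by simp [commAB]

lemma An_le_An {k l : ℕ} (h : k ≤ l) : An p G l ≤ An p G k := by
  intro α hα
  rw [mem_An] at hα ⊢
  exact fun g => gammaP_le_of_le (Nat.succ_le_succ h) (hα g)

lemma stab_mem_gammaP {α : MulAut G} (hα : α ∈ An p G 1) :
    ∀ (m : ℕ) (h : G), h ∈ gammaP p G (m+1) → h⁻¹ * α h ∈ gammaP p G (m+2) := by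
  intro m
  induction m with
  | zero => exact fun h _ => (mem_An.mp hα) h
  | succ m ihm =>
    intro x hx
    rw [gammaP_succ_succ] at hx
    unfold pComm at hx
    induction hx using Subgroup.closure_induction with
    | mem y hy =>
      haveI hNnorm : (gammaP p G (m+3)).Normal := gammaP_normal p G _
      set N := gammaP p G (m + 3) with hN
      set π : G →* G ⧸ N := QuotientGroup.mk' N with hπ
      rcases hy with ⟨g, -, u, hu, rfl⟩ | ⟨u, hu, rfl⟩
      · -- y = commAB g u
        have hc0 : u⁻¹ * α u ∈ gammaP p G (m+2) := ihm u hu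
        have hcd : ∀ t : G, ⁅(u⁻¹ * α u : G), t⁆ ∈ N :=
          fun t => commutator_mem_gammaP' (n := m+1) t hc0
        have hcc : ∀ z : G ⧸ N, Commute (π (u⁻¹ * α u)) z := central_image hcd
        have ha0 : g⁻¹ * α g ∈ gammaP p G 2 := (mem_An.mp hα) g
        have hga : g * (g⁻¹ * α g) = α g := by group
        have huc : u * (u⁻¹ * α u) = α u := by group
        have hαx : α (commAB g u) = commAB (g * (g⁻¹ * α g)) (u * (u⁻¹ * α u)) := by
          rw [hga, huc]; simp [commAB]
        apply mem_of_image_eq_one (N := N)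
        rw [map_mul, map_inv, hαx, map_commAB, map_commAB, map_mul π g, map_mul π u]
        rw [commAB_mul_right_central _ _ hcc]
        rw [← map_mul π g, ← map_commAB, ← map_commAB, ← map_inv, ← map_mul]
        have hid : (commAB g u)⁻¹ * commAB (g * (g⁻¹ * α g)) u
            = commAB (commAB g u) (g⁻¹ * α g) * commAB (g⁻¹ * α g) u := by
          unfold commAB; group
        rw [hid]
        apply (QuotientGroup.eq_one_iff _).mpr
        apply mul_mem
        · rw [commAB_eq_commutator]
          have hgu : (commAB g u)⁻¹ ∈ gammaP p G (m+2) := by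
            apply inv_mem
            rw [gammaP_succ_succ]
            exact mem_pComm_comm trivial hu
          exact commutator_mem_gammaP' (n := m+1) _ hgu
        · rw [commAB_eq_commutator]
          have := comm_mem_gammaP_add m 1 (g⁻¹ * α g)⁻¹ u⁻¹ (inv_mem ha0) (inv_mem hu)
          rw [show 1 + m + 2 = m + 3 by omega] at this
          exact this
      · -- y = u ^ p
        have hc0 : u⁻¹ * α u ∈ gammaP p G (m+2) := ihm u hu
        have hcd : ∀ t : G, ⁅(u⁻¹ * α u : G), t⁆ ∈ N :=
          fun t => commutator_mem_gammaP' (n := m+1) t hc0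
        have hcc : ∀ z : G ⧸ N, Commute (π (u⁻¹ * α u)) z := central_image hcd
        have huc : u * (u⁻¹ * α u) = α u := by group
        apply mem_of_image_eq_one (N := N)
        have hαup : α (u ^ p) = (u * (u⁻¹ * α u)) ^ p := by rw [huc]; simp
        rw [map_mul, map_inv, hαup, map_pow π (u * (u⁻¹ * α u)) p, map_mul π u]
        have hcom : Commute (π u) (π (u⁻¹ * α u)) := (hcc (π u)).symm
        rw [hcom.mul_pow, ← map_pow π u p, ← map_pow π (u⁻¹ * α u) p]
        have hcp : π ((u⁻¹ * α u) ^ p) = 1 :=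
          (QuotientGroup.eq_one_iff _).mpr (pow_mem_gammaP (n := m+1) hc0)
        rw [hcp, mul_one]
        exact inv_mul_cancel _
    | one => simpa using Subgroup.one_mem _
    | mul a b ha hb iha ihb =>
      have e : (a*b)⁻¹ * α (a*b) = (b⁻¹ * (a⁻¹ * α a) * b⁻¹⁻¹) * (b⁻¹ * α b) := by
        rw [map_mul]; group
      rw [e]
      exact mul_mem ((gammaP_normal p G _).conj_mem _ iha b⁻¹) ihb
    | inv a ha iha =>
      have e : (a⁻¹)⁻¹ * α a⁻¹ = a * (a⁻¹ * α a)⁻¹ * a⁻¹ := by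
        rw [map_inv]; group
      rw [e]
      exact (gammaP_normal p G _).conj_mem _ (inv_mem iha) a

end Stab


section PowAn

variable {p : ℕ} {G : Type*} [Group G]

lemma pow_p_mem_An {α : MulAut G} {k : ℕ} (hα : α ∈ An p G (k+1)) :
    α ^ p ∈ An p G (k+2) := by
  rw [mem_An]
  intro g
  haveI : (gammaP p G (k+3)).Normal := gammaP_normal p G _
  set N := gammaP p G (k+3) with hN
  set π : G →* G ⧸ N := QuotientGroup.mk' N with hπ
  have hc : g⁻¹ * α g ∈ gammaP p G (k+2) := (mem_An.mp hα) g
  have key : ∀ n : ℕ, π (g⁻¹ * (α ^ n) g) = (π (g⁻¹ * α g)) ^ n := by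
    intro n
    induction n with
    | zero => simp
    | succ n ih =>
      have e1 : (α ^ (n+1)) g = (α ^ n) g * (α ^ n) (g⁻¹ * α g) := by
        conv_lhs => rw [pow_succ, MulAut.mul_apply,
          show α g = g * (g⁻¹ * α g) by group, map_mul]
      have e2 : g⁻¹ * (α ^ (n+1)) g
          = (g⁻¹ * (α ^ n) g) * ((α ^ n) (g⁻¹ * α g)) := by rw [e1]; group
      rw [e2, map_mul, ih]
      have hst : (g⁻¹ * α g)⁻¹ * ((α ^ n) (g⁻¹ * α g)) ∈ N := by
        have hα1 : (α : MulAut G) ^ n ∈ An p G 1 :=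
          An_le_An (Nat.le_add_left 1 k) (pow_mem hα n)
        exact stab_mem_gammaP hα1 (k+1) _ hc
      have e3 : π ((α ^ n) (g⁻¹ * α g))
          = π (g⁻¹ * α g) * π ((g⁻¹ * α g)⁻¹ * ((α ^ n) (g⁻¹ * α g))) := by
        rw [← map_mul]; congr 1; group
      have hst1 : π ((g⁻¹ * α g)⁻¹ * ((α ^ n) (g⁻¹ * α g))) = 1 :=
        (QuotientGroup.eq_one_iff _).mpr hst
      rw [e3, hst1, mul_one, ← pow_succ]
  apply mem_of_image_eq_one (N := N)
  rw [key p, ← map_pow]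
  exact (QuotientGroup.eq_one_iff _).mpr (pow_mem_gammaP (n := k+1) hc)

lemma pow_pow_mem_An {α : MulAut G} (hα : α ∈ An p G 1) :
    ∀ s : ℕ, α ^ (p ^ s) ∈ An p G (s + 1)
  | 0 => by simpa using hα
  | s+1 => by
      have ih := pow_pow_mem_An hα s
      have : α ^ (p ^ (s+1)) = (α ^ (p ^ s)) ^ p := by rw [← pow_mul, pow_succ]
      rw [this]
      exact pow_p_mem_An ih

lemma An_one_isPGroup (hbot : ∃ m, gammaP p G m = ⊥) :
    IsPGroup p (An p G 1) := by
  obtain ⟨m, hm⟩ := hbot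
  intro α
  refine ⟨m, ?_⟩
  have h1 := pow_pow_mem_An α.2 m
  have h2 : ∀ g : G, g⁻¹ * ((α : MulAut G) ^ (p ^ m)) g = 1 := by
    intro g
    have h3 := (mem_An.mp h1) g
    have h4 : gammaP p G (m + 1 + 1) ≤ ⊥ := hm ▸ gammaP_le_of_le (by omega)
    simpa using h4 h3
  have h5 : (α : MulAut G) ^ (p ^ m) = 1 := by
    ext g
    have e := h2 g
    rw [inv_mul_eq_one] at e
    simpa using e.symm
  refine Subtype.ext ?_
  simp only [SubmonoidClass.coe_pow, OneMemClass.coe_one]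
  exact h5

end PowAn


section Termination

variable {p : ℕ}

lemma eq_one_of_pow_surj {P : Type*} [Group P] [Finite P] (hp : p.Prime)
    (hP : IsPGroup p P) (hsurj : ∀ q : P, ∃ r : P, r ^ p = q) : ∀ q : P, q = 1 := by
  haveI : Fact p.Prime := ⟨hp⟩
  cases nonempty_fintype P
  obtain ⟨n, hn⟩ := IsPGroup.iff_card.mp hP
  have key : ∀ k : ℕ, ∀ q : P, ∃ r, r ^ (p ^ k) = q := by
    intro k
    induction k with
    | zero => exact fun q => ⟨q, by simp⟩
    | succ k ih =>
      intro q
      obtain ⟨r, hr⟩ := hsurj q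
      obtain ⟨s, hs⟩ := ih r
      exact ⟨s, by rw [pow_succ, pow_mul, hs, hr]⟩
  intro q
  obtain ⟨r, hr⟩ := key n q
  rw [← hr, ← hn]
  exact pow_card_eq_one'

lemma eq_bot_of_pComm_eq {P : Type*} [Group P] [Finite P] (hp : p.Prime)
    (hP : IsPGroup p P) {H : Subgroup P} [hHn : H.Normal]
    (hfix : pComm p ⊤ H = H) : H = ⊥ := by
  haveI : Fact p.Prime := ⟨hp⟩
  set C := ⁅(⊤ : Subgroup P), H⁆ with hC
  have hCle : C ≤ H := by
    rw [Subgroup.commutator_le]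
    intro g _ h hh
    rw [commutatorElement_def]
    exact mul_mem (hHn.conj_mem h hh g) (inv_mem hh)
  have hcom : ∀ a b : H ⧸ C.subgroupOf H, a * b = b * a := by
    intro a b
    induction a using QuotientGroup.induction_on with | H a => ?_
    induction b using QuotientGroup.induction_on with | H b => ?_
    rw [← QuotientGroup.mk_mul, ← QuotientGroup.mk_mul]
    apply QuotientGroup.eq.mpr
    rw [Subgroup.mem_subgroupOf]
    have e : (((a * b)⁻¹ * (b * a) : H) : P) = ⁅(b : P)⁻¹, (a : P)⁻¹⁆ := by
      push_cast
      rw [commutatorElement_def]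
      group
    rw [e]
    exact Subgroup.commutator_mem_commutator (Subgroup.mem_top _) (inv_mem a.2)
  have hQP : IsPGroup p (H ⧸ C.subgroupOf H) := (hP.to_subgroup H).to_quotient _
  have main : ∀ x, x ∈ pComm p ⊤ H → ∀ (hxH : x ∈ H),
      ∃ r : H ⧸ C.subgroupOf H, r ^ p = QuotientGroup.mk ⟨x, hxH⟩ := by
    intro x hx
    unfold pComm at hx
    induction hx using Subgroup.closure_induction with
    | mem y hy =>
      intro hyH
      rcases hy with ⟨g, -, h, hh, rfl⟩ | ⟨h, hh, rfl⟩
      · refine ⟨1, ?_⟩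
        rw [one_pow]
        symm
        rw [QuotientGroup.eq_one_iff, Subgroup.mem_subgroupOf]
        show commAB g h ∈ C
        rw [commAB_eq_commutator]
        exact Subgroup.commutator_mem_commutator (Subgroup.mem_top _) (inv_mem hh)
      · refine ⟨QuotientGroup.mk ⟨h, hh⟩, ?_⟩
        rw [← QuotientGroup.mk_pow]
        rfl
    | one =>
      intro h1
      refine ⟨1, ?_⟩
      rw [one_pow]
      symm
      rw [QuotientGroup.eq_one_iff, Subgroup.mem_subgroupOf]
      exact one_mem C
    | mul x y hx hy ihx ihy =>
      intro hxy
      have hxH : x ∈ H := by rw [← hfix]; exact hx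
      have hyH : y ∈ H := by rw [← hfix]; exact hy
      obtain ⟨rx, hrx⟩ := ihx hxH
      obtain ⟨ry, hry⟩ := ihy hyH
      refine ⟨rx * ry, ?_⟩
      have hmp : (rx * ry) ^ p = rx ^ p * ry ^ p := Commute.mul_pow (hcom rx ry) p
      rw [hmp, hrx, hry, ← QuotientGroup.mk_mul]
      rfl
    | inv x hx ihx =>
      intro hxi
      have hxH : x ∈ H := by rw [← hfix]; exact hx
      obtain ⟨r, hr⟩ := ihx hxH
      refine ⟨r⁻¹, ?_⟩
      rw [inv_pow, hr]
      rfl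
  have hsurj : ∀ q : H ⧸ C.subgroupOf H, ∃ r, r ^ p = q := by
    intro q
    induction q using QuotientGroup.induction_on with | H a => ?_
    obtain ⟨x, hxH⟩ := a
    exact main x (by rw [hfix]; exact hxH) hxH
  have trivialQ := eq_one_of_pow_surj hp hQP hsurj
  have hHC : H ≤ C := by
    intro h hh
    have h1 : (QuotientGroup.mk ⟨h, hh⟩ : H ⧸ C.subgroupOf H) = 1 := trivialQ _
    rw [QuotientGroup.eq_one_iff, Subgroup.mem_subgroupOf] at h1
    exact h1
  obtain ⟨t, ht⟩ := nilpotent_iff_lowerCentralSeries.mp hP.isNilpotent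
  have hLCS : ∀ s, H ≤ Subgroup.lowerCentralSeries (⊤ : Subgroup P) s := by
    intro s
    induction s with
    | zero => exact le_top
    | succ s ih =>
      rw [lowerCentralSeries_succ]
      calc H ≤ C := hHC
        _ = ⁅H, ⊤⁆ := Subgroup.commutator_comm ⊤ H
        _ ≤ ⁅Subgroup.lowerCentralSeries (⊤ : Subgroup P) s, ⊤⁆ := Subgroup.commutator_mono ih le_rfl
  exact le_bot_iff.mp (ht ▸ hLCS t)

lemma exists_gammaP_eq_bot {P : Type*} [Group P] [Finite P] (hp : p.Prime)
    (hP : IsPGroup p P) : ∃ m, gammaP p P m = ⊥ := by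
  obtain ⟨c, ⟨n0, rfl⟩, hmin⟩ := wellFounded_lt.has_min
    (Set.range fun n => Nat.card (gammaP p P (n+1))) ⟨_, 0, rfl⟩
  have hle : gammaP p P (n0+2) ≤ gammaP p P (n0+1) := gammaP_succ_le _
  have hcardle : Nat.card (gammaP p P (n0+1)) ≤ Nat.card (gammaP p P (n0+2)) := by
    by_contra hlt
    push_neg at hlt
    exact hmin _ ⟨n0+1, rfl⟩ hlt
  have heq : gammaP p P (n0+2) = gammaP p P (n0+1) := by
    apply SetLike.coe_injective
    apply Set.eq_of_subset_of_ncard_le hle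
    rw [← Nat.card_coe_set_eq, ← Nat.card_coe_set_eq]
    exact hcardle
  refine ⟨n0+1, eq_bot_of_pComm_eq hp hP ?_⟩
  rw [← gammaP_succ_succ]
  exact heq

end Termination


section FiniteIndexChain

variable {p : ℕ} {G : Type*} [Group G]

/-- A finitely generated group in which every element satisfies `x ^ p = 1` (with `p` prime)
and any two elements commute is finite. -/
lemma finite_of_fg_comm_exp (Q : Type*) [grp : Group Q] (hfg : Group.FG Q) (hp : p.Prime)
    (hcom : ∀ a b : Q, a * b = b * a) (hexp : ∀ a : Q, a ^ p = 1) : Finite Q := by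
  letI : CommGroup Q := { grp with mul_comm := hcom }
  haveI : Group.FG Q := hfg
  apply CommGroup.finite_of_fg_torsion
  intro a
  exact isOfFinOrder_iff_pow_eq_one.mpr ⟨p, hp.pos, hexp a⟩

lemma gammaP_finiteIndex (hfg : Group.FG G) (hp : p.Prime) :
    ∀ n, (gammaP p G (n+1)).FiniteIndex := by
  intro n
  induction n with
  | zero => exact Subgroup.instFiniteIndexTop
  | succ n ih =>
    haveI := hfg
    haveI := ih
    haveI : Group.FG (gammaP p G (n+1)) := Subgroup.fg_of_index_ne_zero _
    set H := gammaP p G (n+1) with hH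
    set K := gammaP p G (n+2) with hK
    have hKH : K ≤ H := gammaP_succ_le _
    have hfin : Finite (H ⧸ K.subgroupOf H) := by
      apply finite_of_fg_comm_exp _ _ hp
      · -- commutative
        intro a b
        induction a using QuotientGroup.induction_on with | H a => ?_
        induction b using QuotientGroup.induction_on with | H b => ?_
        rw [← QuotientGroup.mk_mul, ← QuotientGroup.mk_mul]
        apply QuotientGroup.eq.mpr
        rw [Subgroup.mem_subgroupOf]
        have e : (((a * b)⁻¹ * (b * a) : H) : G) = commAB (b : G) (a : G) := by
          push_cast
          unfold commAB
          group
        rw [e, hK, gammaP_succ_succ]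
        exact mem_pComm_comm trivial a.2
      · -- exponent p
        intro a
        induction a using QuotientGroup.induction_on with | H a => ?_
        rw [← QuotientGroup.mk_pow, QuotientGroup.eq_one_iff, Subgroup.mem_subgroupOf]
        show ((a : G) ^ p) ∈ K
        rw [hK, gammaP_succ_succ]
        exact mem_pComm_pow a.2
      · exact Group.fg_of_surjective (QuotientGroup.mk'_surjective _)
    constructor
    rw [← Subgroup.relIndex_mul_index hKH]
    apply Nat.mul_ne_zero
    · show (K.subgroupOf H).index ≠ 0
      rw [Subgroup.index_eq_card]
      exact Nat.card_ne_zero.mpr ⟨inferInstance, hfin⟩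
    · exact Subgroup.FiniteIndex.index_ne_zero

end FiniteIndexChain

/-- A wrapper around `Fin n` carrying no algebraic instances, used to transport a finite
group structure into `Type 0`. -/
structure PackFin (n : ℕ) : Type where
  val : Fin n

/-- The obvious equivalence between `PackFin n` and `Fin n`. -/
def packFinEquiv (n : ℕ) : PackFin n ≃ Fin n where
  toFun := PackFin.val
  invFun := PackFin.mk
  left_inv := fun _ => rfl
  right_inv := fun _ => rfl

/-- **Theorem 1.6 / 2.5.** If `G` is finitely generated, conjugacy `p`-separable and has
Property A, then `𝓘_p(G) = I_p(G)/Inn(G)` is residually `p`. -/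
theorem Ip_quotient_Inn_residuallyP (p : ℕ) (hp : p.Prime) (G : Type*) [Group G]
    (hfg : Group.FG G) (hconj : IsConjPSeparable p G) (hA : PropertyA G) :
    IsResiduallyP p (↥(Ip p G) ⧸ InnSub p G) := by
  intro x hx
  obtain ⟨αs, rfl⟩ := QuotientGroup.mk'_surjective (InnSub p G) x
  have hαnotinn : αs ∉ InnSub p G := by
    intro h
    exact hx ((QuotientGroup.eq_one_iff αs).mpr h)
  have hnotall : ¬ ∀ g : G, IsConj g ((αs : MulAut G) g) := by
    intro hall
    exact hαnotinn (hA (αs : MulAut G) hall)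
  push_neg at hnotall
  obtain ⟨g0, hg0⟩ := hnotall
  rcases hconj g0 ((αs : MulAut G) g0) with hcj | ⟨P, _, _, φ, hPp, hφsurj, hncj⟩
  · exact absurd hcj hg0
  obtain ⟨m0, hm0⟩ := exists_gammaP_eq_bot hp hPp
  set m := max m0 2 with hm
  have hbotP : gammaP p P m = ⊥ :=
    le_bot_iff.mp (hm0 ▸ gammaP_le_of_le (le_max_left _ _))
  set N := gammaP p G m with hN
  haveI hNnorm : N.Normal := gammaP_normal p G m
  have hNker : N ≤ φ.ker := by
    intro z hzN
    have h1 : φ z ∈ (gammaP p G m).map φ := ⟨z, hzN, rfl⟩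
    rw [gammaP_map φ hφsurj m, hbotP] at h1
    exact h1
  haveI hNfi : N.FiniteIndex := by
    obtain ⟨m', hm'⟩ : ∃ k, m = k + 1 := ⟨m - 1, by omega⟩
    rw [hN, hm']
    exact gammaP_finiteIndex hfg hp m'
  haveI hfinQ : Finite (G ⧸ N) := inferInstance
  have hmapN : ∀ n, (gammaP p G n).map (QuotientGroup.mk' N) = gammaP p (G ⧸ N) n :=
    gammaP_map _ (QuotientGroup.mk'_surjective N)
  have hbotQ : gammaP p (G ⧸ N) m = ⊥ := by
    rw [← hmapN m]
    rw [eq_bot_iff]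
    rintro z ⟨w, hw, rfl⟩
    exact (QuotientGroup.eq_one_iff w).mpr hw
  have hchar : ∀ e : MulAut G, N.map (e : G →* G) = N := fun e => by
    rw [hN]
    exact gammaP_map (e : G →* G) e.surjective m
  let Φ : MulAut G →* MulAut (G ⧸ N) :=
    { toFun := fun e => QuotientGroup.congr N N e (hchar e)
      map_one' := by
        apply MulEquiv.ext
        intro z
        induction z using QuotientGroup.induction_on with
        | H y => rfl
      map_mul' := by
        intro a b
        apply MulEquiv.ext
        intro z
        induction z using QuotientGroup.induction_on with
        | H y => rfl }
  have hΦapp : ∀ (e : MulAut G) (y : G),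
      Φ e ((y : G ⧸ N)) = (((e y : G)) : G ⧸ N) := fun e y => rfl
  have hΦmem : ∀ β : Ip p G, Φ (β : MulAut G) ∈ An p (G ⧸ N) 1 := by
    intro β
    rw [mem_An]
    intro z
    induction z using QuotientGroup.induction_on with
    | H y =>
      have h1 : y⁻¹ * (β : MulAut G) y ∈ gammaP p G 2 := (mem_An.mp β.2) y
      have h2 : (QuotientGroup.mk' N) (y⁻¹ * (β : MulAut G) y) ∈ gammaP p (G ⧸ N) 2 := by
        rw [← hmapN 2]
        exact ⟨_, h1, rfl⟩
      rw [map_mul, map_inv] at h2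
      exact h2
  let ψ : (Ip p G) →* (An p (G ⧸ N) 1) :=
    { toFun := fun β => ⟨Φ (β : MulAut G), hΦmem β⟩
      map_one' := by
        apply Subtype.ext
        show Φ ((1 : Ip p G) : MulAut G) = 1
        rw [OneMemClass.coe_one, map_one]
      map_mul' := by
        intro a b
        apply Subtype.ext
        show Φ ((a * b : Ip p G) : MulAut G) = Φ (a : MulAut G) * Φ (b : MulAut G)
        rw [Subgroup.coe_mul, map_mul] }
  haveI hfinM : Finite (MulAut (G ⧸ N)) :=
    Finite.of_injective (fun e => (e : G ⧸ N → G ⧸ N)) fun a b h => by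
      apply MulEquiv.ext
      intro z
      exact congrFun h z
  have hA1p : IsPGroup p (An p (G ⧸ N) 1) := An_one_isPGroup ⟨m, hbotQ⟩
  let J : Subgroup ψ.range := (InnSub p G).map ψ.rangeRestrict
  haveI hJn : J.Normal :=
    Subgroup.Normal.map (innSub_normal p G) ψ.rangeRestrict ψ.rangeRestrict_surjective
  have hRp : IsPGroup p (ψ.range ⧸ J) := (hA1p.to_subgroup ψ.range).to_quotient J
  haveI : Finite (ψ.range ⧸ J) := Quotient.finite _
  let F : (↥(Ip p G) ⧸ InnSub p G) →* (ψ.range ⧸ J) :=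
    QuotientGroup.map (InnSub p G) J ψ.rangeRestrict (Subgroup.le_comap_map _ _)
  have hFsurj : Function.Surjective F := by
    intro z
    induction z using QuotientGroup.induction_on with
    | H r =>
      obtain ⟨β, rfl⟩ := ψ.rangeRestrict_surjective r
      exact ⟨QuotientGroup.mk β, rfl⟩
  have hFne : F (QuotientGroup.mk' (InnSub p G) αs) ≠ 1 := by
    intro hF1
    have h1 : ψ.rangeRestrict αs ∈ J := by
      rwa [show F (QuotientGroup.mk' (InnSub p G) αs)
          = QuotientGroup.mk (ψ.rangeRestrict αs) from rfl,
        QuotientGroup.eq_one_iff] at hF1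
    obtain ⟨β, hβInn, hβeq⟩ := h1
    have hψeq : ψ β = ψ αs := congrArg Subtype.val hβeq
    have hΦeq : Φ (β : MulAut G) = Φ (αs : MulAut G) := congrArg Subtype.val hψeq
    have hg0eq : (((β : MulAut G) g0 : G) : G ⧸ N) = (((αs : MulAut G) g0 : G) : G ⧸ N) := by
      rw [← hΦapp, ← hΦapp, hΦeq]
    have hmemN : ((β : MulAut G) g0)⁻¹ * (αs : MulAut G) g0 ∈ N :=
      QuotientGroup.eq.mp hg0eq
    obtain ⟨w, hw⟩ := hβInn
    have hβg0 : (β : MulAut G) g0 = w * g0 * w⁻¹ := by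
      have h := congrArg (fun e : MulAut G => e g0) hw
      simpa [MulAut.conj_apply] using h.symm
    apply hncj
    rw [isConj_iff]
    refine ⟨φ w, ?_⟩
    have hφn : φ (((β : MulAut G) g0)⁻¹ * (αs : MulAut G) g0) = 1 := hNker hmemN
    have hαg0 : (αs : MulAut G) g0
        = (β : MulAut G) g0 * (((β : MulAut G) g0)⁻¹ * (αs : MulAut G) g0) := by group
    rw [hαg0, map_mul, hφn, mul_one, hβg0, map_mul, map_mul, map_inv]
  obtain ⟨n, ⟨eqv0⟩⟩ := Finite.exists_equiv_fin (ψ.range ⧸ J)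
  let eqv : PackFin n ≃ (ψ.range ⧸ J) := (packFinEquiv n).trans eqv0.symm
  letI : Group (PackFin n) := eqv.group
  haveI : Finite (PackFin n) := Finite.of_equiv _ eqv.symm
  let e2 : PackFin n ≃* (ψ.range ⧸ J) := by exact eqv.mulEquiv
  refine ⟨PackFin n, inferInstance, inferInstance,
    (e2.symm.toMonoidHom).comp F, ?_, ?_, ?_⟩
  · exact hRp.of_surjective e2.symm.toMonoidHom e2.symm.surjective
  · exact e2.symm.surjective.comp hFsurj
  · intro h1
    exact hFne (e2.symm.injective (h1.trans (map_one e2.symm).symm))
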